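/- For every prime p, there are infinitely many positive integers n such that λ(n² + p) = −1. -/

import Mathlib

/-- The Liouville function: `λ(n) = (-1)^Ω(n)` where `Ω(n)` counts prime factors
of `n` with multiplicity. -/
def liouvilleFun (n : ℕ) : ℤ := (-1) ^ n.primeFactorsList.length

open ArithmeticFunction ArithmeticFunction.Omega in
lemma liouvilleFun_prime_mul_sq {p X : ℕ} (hp : p.Prime) (hX : 0 < X) :
    liouvilleFun (p * X ^ 2) = -1 := by
  have h1 : Ω (p * X ^ 2) = Ω p + Ω (X ^ 2) :=
    cardFactors_mul hp.pos.ne' (by positivity)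
  have h2 : Ω p = 1 := cardFactors_apply_prime hp
  have h3 : Ω (X ^ 2) = 2 * Ω X := by
    rw [sq, cardFactors_mul hX.ne' hX.ne', two_mul]
  have : Ω (p * X ^ 2) = 1 + 2 * Ω X := by rw [h1, h2, h3]
  rw [liouvilleFun, ← ArithmeticFunction.cardFactors_apply, this]
  have : Odd (1 + 2 * Ω X) := ⟨Ω X, by ring⟩
  exact this.neg_one_pow

lemma pell_y_big {d : ℤ} (hd : 0 < d) (hsq : ¬ IsSquare d) (N : ℕ) :
    ∃ a : Pell.Solution₁ d, 0 < a.x ∧ (N : ℤ) < a.y := by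
  obtain ⟨a, hax, hay⟩ := Pell.Solution₁.exists_pos_of_not_isSquare hd hsq
  have key : ∀ n : ℕ, (n : ℤ) + 1 ≤ (a ^ (n + 1)).y := by
    intro n
    induction n with
    | zero => simpa using Int.add_one_le_of_lt hay
    | succ n ih =>
      have hx : 0 < (a ^ (n + 1)).x := Pell.Solution₁.x_pow_pos (by linarith) _
      have : a ^ (n + 2) = a ^ (n + 1) * a := pow_succ a (n+1)
      rw [this, Pell.Solution₁.y_mul]
      push_cast
      nlinarith
  exact ⟨a ^ (N + 1), Pell.Solution₁.x_pow_pos (by linarith) _, by have := key N; linarith⟩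

theorem liouville_neg_infinitely_often_sq_add_prime (p : ℕ) (hp : p.Prime) :
    {n : ℕ | 0 < n ∧ liouvilleFun (n ^ 2 + p) = -1}.Infinite := by
  apply Set.infinite_of_forall_exists_gt
  intro N
  have hd : (0 : ℤ) < (p : ℤ) := by exact_mod_cast hp.pos
  have hsq : ¬ IsSquare ((p : ℤ)) := (Nat.prime_iff_prime_int.mp hp).not_isSquare
  obtain ⟨a, hxpos, hay⟩ := pell_y_big hd hsq N
  have hprop := a.prop
  -- a.x^2 - p * a.y^2 = 1
  have hypos : 0 < a.y := lt_of_le_of_lt (by positivity) hay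
  set Y : ℕ := a.y.toNat with hY
  set X : ℕ := a.x.toNat with hX
  have hYc : (Y : ℤ) = a.y := Int.toNat_of_nonneg hypos.le
  have hXc : (X : ℤ) = a.x := Int.toNat_of_nonneg hxpos.le
  have hYpos : 0 < Y := by omega
  have hXpos : 0 < X := by omega
  refine ⟨p * Y, ⟨Nat.mul_pos hp.pos hYpos, ?_⟩, ?_⟩
  · have hkey : (p * Y) ^ 2 + p = p * X ^ 2 := by
      have : ((p * Y) ^ 2 + p : ℤ) = p * (X : ℤ) ^ 2 := by
        rw [hYc, hXc]; nlinarith [a.prop]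
      exact_mod_cast this
    rw [hkey]
    exact liouvilleFun_prime_mul_sq hp hXpos
  · have h1 : N < Y := by omega
    calc N < Y := h1
      _ ≤ p * Y := Nat.le_mul_of_pos_left _ hp.pos
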